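/- Let G be a weak dual equivalence graph of type n+1 all of whose n-components are dual equivalence graphs, and let φ : G → G_λ be a surjective morphism restricting to an isomorphism on n-components. Then no two n-components of G that are both isomorphic to G_μ (for the same partition μ of n) are joined by an edge of color n−1... i.e., if C and D are distinct n-components with φ(C) = φ(D) = G_μ (same image), then there is no (n−1)-colored edge between a vertex of C and a vertex of D. -/

import Mathlib

open scoped Classical

/-- The content (diagonal) of a cell `(r, c)` is `c - r` (English convention,
NW–SE diagonals). -/
def cellContent (c : ℕ × ℕ) : ℤ := (c.2 : ℤ) - (c.1 : ℤ)

/-- A standard Young tableau of shape `μ`: a filling of the cells of `μ` with the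
entries `1, …, μ.card`, bijectively, strictly increasing along rows and columns.
(Cells outside the diagram carry the junk value `0`.) -/
structure SYT (μ : YoungDiagram) where
  entry : ℕ × ℕ → ℕ
  bijOn : Set.BijOn entry (μ : Set (ℕ × ℕ)) (Set.Icc 1 μ.card)
  zero_of_not_mem : ∀ c, c ∉ μ → entry c = 0
  row_strict : ∀ a b : ℕ × ℕ, a ∈ μ → b ∈ μ → a.1 = b.1 → a.2 < b.2 → entry a < entry b
  col_strict : ∀ a b : ℕ × ℕ, a ∈ μ → b ∈ μ → a.2 = b.2 → a.1 < b.1 → entry a < entry b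

/-- `i` is a descent of `T`: `i` is located in a (strictly) higher row than `i+1`. -/
def SYT.Desc {μ : YoungDiagram} (T : SYT μ) (i : ℕ) : Prop :=
  ∃ a b : ℕ × ℕ, a ∈ μ ∧ b ∈ μ ∧ T.entry a = i ∧ T.entry b = i + 1 ∧ a.1 < b.1

/-- `U` is obtained from `T` by the dual Knuth move exchanging `j` and `j+1`:
the exchange is permitted because some cell with entry `j-1` or `j+2` lies on a
diagonal strictly between the diagonals of `j` and `j+1`. -/
def SYT.DKSwap {μ : YoungDiagram} (T U : SYT μ) (j : ℕ) : Prop :=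
  1 ≤ j ∧ (∀ c : ℕ × ℕ, U.entry c = Equiv.swap j (j + 1) (T.entry c)) ∧
  ∃ a b w : ℕ × ℕ, a ∈ μ ∧ b ∈ μ ∧ w ∈ μ ∧
    T.entry a = j ∧ T.entry b = j + 1 ∧
    (T.entry w + 1 = j ∨ T.entry w = j + 2) ∧
    cellContent w ∈
      Set.Ioo (min (cellContent a) (cellContent b)) (max (cellContent a) (cellContent b))

/-- `T` and `U` are related by a dual Knuth move. -/
def SYT.DKEdge {μ : YoungDiagram} (T U : SYT μ) : Prop := ∃ j, T.DKSwap U j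

/-- The edge `(T,U)` activates the bond `a_i`: exactly one of the descent sets of
`T`, `U` contains `i`, and exactly the other contains `i+1`. -/
def SYT.Activ {μ : YoungDiagram} (T U : SYT μ) (i : ℕ) : Prop :=
  (T.Desc i ∧ ¬ U.Desc i ∧ U.Desc (i + 1) ∧ ¬ T.Desc (i + 1)) ∨
  (U.Desc i ∧ ¬ T.Desc i ∧ T.Desc (i + 1) ∧ ¬ U.Desc (i + 1))

/-- A signed colored graph of type `n+1`: a finite simple graph with
`τ : V → 2^{1,…,n}` and edge labels `β ⊆ {a_1, …, a_{n-1}}` (the color `i`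
stands for `a_i`). -/
structure SCG (n : ℕ) (V : Type) where
  E : V → V → Prop
  τ : V → Set ℕ
  β : V → V → Set ℕ
  symm : ∀ u v, E u v → E v u
  irrefl : ∀ v, ¬ E v v
  τ_sub : ∀ v, τ v ⊆ Set.Icc 1 n
  β_sub : ∀ u v, β u v ⊆ Set.Icc 1 (n - 1)
  β_symm : ∀ u v, β u v = β v u
  β_empty : ∀ u v, ¬ E u v → β u v = ∅

/-- The standard dual equivalence graph `G_λ` as a signed colored graph of type
`n+1`: vertices are the standard Young tableaux of shape `λ`, edges are dual Knuth
moves, and the label of an edge is the set of bonds it activates. -/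
def stdSCG (n : ℕ) (lam : YoungDiagram) : SCG n (SYT lam) where
  E := fun T U => T ≠ U ∧ (T.DKEdge U ∨ U.DKEdge T)
  τ := fun T => {i | i ∈ Set.Icc 1 n ∧ T.Desc i}
  β := fun T U => {i | i ∈ Set.Icc 1 (n - 1) ∧
    (T ≠ U ∧ (T.DKEdge U ∨ U.DKEdge T)) ∧ T.Activ U i}
  symm := fun u v h => ⟨Ne.symm h.1, Or.symm h.2⟩
  irrefl := fun v h => h.1 rfl
  τ_sub := fun v i hi => hi.1
  β_sub := fun u v i hi => hi.1
  β_symm := by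
    intro u v
    ext i
    constructor <;> rintro ⟨h1, ⟨hne, he⟩, hact⟩ <;>
      exact ⟨h1, ⟨Ne.symm hne, Or.symm he⟩, Or.symm hact⟩
  β_empty := fun u v h =>
    Set.eq_empty_iff_forall_notMem.mpr fun i hi => h hi.2.1

/-- The `(k+1)`-restriction of a signed colored graph of type `n+1`: intersect
`τ` with `{1,…,k}` and `β` with `{a_1,…,a_{k-1}}`, keeping the edges whose
restricted label is nonempty. -/
def SCG.restrict {n : ℕ} {V : Type} (G : SCG n V) (k : ℕ) : SCG k V where
  E := fun u v => G.E u v ∧ (G.β u v ∩ Set.Icc 1 (k - 1)).Nonempty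
  τ := fun v => G.τ v ∩ Set.Icc 1 k
  β := fun u v => G.β u v ∩ Set.Icc 1 (k - 1)
  symm := fun u v h => ⟨G.symm u v h.1, by rw [G.β_symm v u]; exact h.2⟩
  irrefl := fun v h => G.irrefl v h.1
  τ_sub := fun v => Set.inter_subset_right
  β_sub := fun u v => Set.inter_subset_right
  β_symm := fun u v => by
    show G.β u v ∩ _ = G.β v u ∩ _
    rw [G.β_symm u v]
  β_empty := fun u v h => by
    by_cases he : G.E u v
    · exact Set.not_nonempty_iff_eq_empty.mp fun hne => h ⟨he, hne⟩
    · show G.β u v ∩ _ = ∅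
      rw [G.β_empty u v he]; exact Set.empty_inter _

/-- The subgraph induced on a set of vertices. -/
def SCG.induce {n : ℕ} {V : Type} (G : SCG n V) (A : Set V) : SCG n A where
  E := fun u v => G.E u.1 v.1
  τ := fun v => G.τ v.1
  β := fun u v => G.β u.1 v.1
  symm := fun u v h => G.symm u.1 v.1 h
  irrefl := fun v => G.irrefl v.1
  τ_sub := fun v => G.τ_sub v.1
  β_sub := fun u v => G.β_sub u.1 v.1
  β_symm := fun u v => G.β_symm u.1 v.1
  β_empty := fun u v => G.β_empty u.1 v.1

/-- The connected component of `v`. -/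
def SCG.comp {n : ℕ} {V : Type} (G : SCG n V) (v : V) : Set V :=
  {u | Relation.ReflTransGen G.E v u}

/-- The connected component of `v` using only edges with a color in `K`. -/
def SCG.compC {n : ℕ} {V : Type} (G : SCG n V) (K : Set ℕ) (v : V) : Set V :=
  {u | Relation.ReflTransGen (fun a b => G.E a b ∧ (G.β a b ∩ K).Nonempty) v u}

/-- Axiom 1: `w` admits an `i`-neighbor iff it lies on an `i`-colored edge, and
then the `i`-neighbor is unique. -/
def ax1 {n : ℕ} {V : Type} (G : SCG n V) : Prop :=
  ∀ i, 1 ≤ i → i ≤ n - 1 → ∀ w : V,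
    ((Xor' (i ∈ G.τ w) (i + 1 ∈ G.τ w)) ↔ ∃ x, G.E w x ∧ i ∈ G.β w x) ∧
    (∀ x y, G.E w x → i ∈ G.β w x → G.E w y → i ∈ G.β w y → x = y)

/-- Axiom 2: an `i`-colored edge switches `i` and `i+1` in the τ-invariant and
affects no labels besides `i-1, i, i+1, i+2`. -/
def ax2 {n : ℕ} {V : Type} (G : SCG n V) : Prop :=
  ∀ i, 1 ≤ i → i ≤ n - 1 → ∀ w x : V, G.E w x → i ∈ G.β w x →
    (i ∈ G.τ w ↔ i ∉ G.τ x) ∧ (i + 1 ∈ G.τ w ↔ i + 1 ∉ G.τ x) ∧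
    ∀ h, (h + 1 < i ∨ h > i + 2) → (h ∈ G.τ w ↔ h ∈ G.τ x)

/-- Axiom 3. -/
def ax3 {n : ℕ} {V : Type} (G : SCG n V) : Prop :=
  ∀ i, 1 ≤ i → i ≤ n - 1 → ∀ w x : V, G.E w x → i ∈ G.β w x →
    (i - 1 ∈ symmDiff (G.τ w) (G.τ x) → (i - 1 ∈ G.τ w ↔ i + 1 ∈ G.τ w)) ∧
    (i + 2 ∈ symmDiff (G.τ w) (G.τ x) → (i + 2 ∈ G.τ w ↔ i ∈ G.τ w))

/-- Axiom 4: every connected component of the subgraph of `{i,i+1}`-colored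
(resp. `{i,i+1,i+2}`-colored) edges has one of the allowed forms, i.e. is
isomorphic, matching edges and their colors, to such a component of a standard
dual equivalence graph. -/
def ax4 {n : ℕ} {V : Type} (G : SCG n V) : Prop :=
  (∀ i, 1 ≤ i → i < n - 2 → ∀ v : V,
    ∃ (lam : YoungDiagram) (_ : lam.card = n + 1) (T0 : SYT lam)
      (f : (G.compC {i, i + 1} v) ≃ ((stdSCG n lam).compC {i, i + 1} T0)),
      ∀ u w : G.compC {i, i + 1} v, ∀ c ∈ ({i, i + 1} : Set ℕ),
        (G.E u.1 w.1 ∧ c ∈ G.β u.1 w.1) ↔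
        ((stdSCG n lam).E (f u).1 (f w).1 ∧ c ∈ (stdSCG n lam).β (f u).1 (f w).1)) ∧
  (∀ i, 1 ≤ i → i < n - 3 → ∀ v : V,
    ∃ (lam : YoungDiagram) (_ : lam.card = n + 1) (T0 : SYT lam)
      (f : (G.compC {i, i + 1, i + 2} v) ≃ ((stdSCG n lam).compC {i, i + 1, i + 2} T0)),
      ∀ u w : G.compC {i, i + 1, i + 2} v, ∀ c ∈ ({i, i + 1, i + 2} : Set ℕ),
        (G.E u.1 w.1 ∧ c ∈ G.β u.1 w.1) ↔
        ((stdSCG n lam).E (f u).1 (f w).1 ∧ c ∈ (stdSCG n lam).β (f u).1 (f w).1))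

/-- Axiom 5: edges of colors at distance at least 3 commute. -/
def ax5 {n : ℕ} {V : Type} (G : SCG n V) : Prop :=
  ∀ i j : ℕ, (i + 3 ≤ j ∨ j + 3 ≤ i) → ∀ w x y : V,
    G.E w x → i ∈ G.β w x → G.E x y → j ∈ G.β x y →
    ∃ v : V, G.E w v ∧ j ∈ G.β w v ∧ G.E v y ∧ i ∈ G.β v y

/-- Axiom 6: inside a component of the subgraph of edges of colors `≤ i`, any two
components of the subgraph of edges of colors `≤ i-1` are joined by an edge of
color `i`. -/
def ax6 {n : ℕ} {V : Type} (G : SCG n V) : Prop :=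
  ∀ i, 2 ≤ i → i ≤ n - 1 → ∀ u v : V,
    v ∈ G.compC (Set.Icc 1 i) u → v ∉ G.compC (Set.Icc 1 (i - 1)) u →
    ∃ u' v' : V, u' ∈ G.compC (Set.Icc 1 (i - 1)) u ∧
      v' ∈ G.compC (Set.Icc 1 (i - 1)) v ∧ G.E u' v' ∧ i ∈ G.β u' v'

/-- A weak dual equivalence graph: axioms 1–5. -/
def IsWeakDEG {n : ℕ} {V : Type} (G : SCG n V) : Prop :=
  ax1 G ∧ ax2 G ∧ ax3 G ∧ ax4 G ∧ ax5 G

/-- A dual equivalence graph: axioms 1–6. -/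
def IsDEG {n : ℕ} {V : Type} (G : SCG n V) : Prop :=
  IsWeakDEG G ∧ ax6 G
section Toolkit

namespace SYT

variable {μ : YoungDiagram}

theorem ext' {T U : SYT μ} (h : T.entry = U.entry) : T = U := by
  cases T; cases U; simp_all

lemma entry_mem (T : SYT μ) {c : ℕ × ℕ} (hc : c ∈ μ) :
    T.entry c ∈ Set.Icc 1 μ.card := T.bijOn.mapsTo hc

lemma one_le_entry (T : SYT μ) {c : ℕ × ℕ} (hc : c ∈ μ) : 1 ≤ T.entry c :=
  (T.entry_mem hc).1

lemma entry_le_card (T : SYT μ) {c : ℕ × ℕ} (hc : c ∈ μ) : T.entry c ≤ μ.card :=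
  (T.entry_mem hc).2

/-- lower-set property, pair form -/
lemma _root_.YoungDiagram.lower_mem (μ : YoungDiagram) {x y : ℕ × ℕ}
    (h1 : x.1 ≤ y.1) (h2 : x.2 ≤ y.2) (hy : y ∈ μ) : x ∈ μ := by
  obtain ⟨y1, y2⟩ := y
  obtain ⟨x1, x2⟩ := x
  exact μ.up_left_mem h1 h2 hy

/-- strict monotonicity of entries -/
lemma entry_lt_entry (T : SYT μ) {a b : ℕ × ℕ} (ha : a ∈ μ) (hb : b ∈ μ)
    (h1 : a.1 ≤ b.1) (h2 : a.2 ≤ b.2) (hne : a ≠ b) : T.entry a < T.entry b := by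
  rcases eq_or_lt_of_le h1 with h1' | h1'
  · refine T.row_strict a b ha hb h1' ?_
    rcases eq_or_lt_of_le h2 with h2' | h2'
    · exact absurd (Prod.ext h1' h2') hne
    · exact h2'
  · rcases eq_or_lt_of_le h2 with h2' | h2'
    · exact T.col_strict a b ha hb h2' h1'
    · have hmid : (a.1, b.2) ∈ μ := μ.up_left_mem (le_of_lt h1') le_rfl hb
      calc T.entry a < T.entry (a.1, b.2) := T.row_strict a _ ha hmid rfl h2'
        _ < T.entry b := T.col_strict _ b hmid hb rfl h1'

lemma entry_le_entry (T : SYT μ) {a b : ℕ × ℕ} (ha : a ∈ μ) (hb : b ∈ μ)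
    (h1 : a.1 ≤ b.1) (h2 : a.2 ≤ b.2) : T.entry a ≤ T.entry b := by
  by_cases h : a = b
  · subst h; rfl
  · exact le_of_lt (T.entry_lt_entry ha hb h1 h2 h)

/-- The cell holding entry `k`. -/
noncomputable def cellOf (T : SYT μ) (k : ℕ) : ℕ × ℕ :=
  if h : ∃ c ∈ (μ : Set (ℕ × ℕ)), T.entry c = k then h.choose else (0, 0)

lemma exists_cell (T : SYT μ) {k : ℕ} (hk : k ∈ Set.Icc 1 μ.card) :
    ∃ c ∈ (μ : Set (ℕ × ℕ)), T.entry c = k := T.bijOn.surjOn hk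

lemma cellOf_mem (T : SYT μ) {k : ℕ} (hk : k ∈ Set.Icc 1 μ.card) :
    T.cellOf k ∈ μ := by
  have h := T.exists_cell hk
  rw [cellOf, dif_pos h]
  exact h.choose_spec.1

lemma entry_cellOf (T : SYT μ) {k : ℕ} (hk : k ∈ Set.Icc 1 μ.card) :
    T.entry (T.cellOf k) = k := by
  have h := T.exists_cell hk
  rw [cellOf, dif_pos h]
  exact h.choose_spec.2

lemma eq_cellOf (T : SYT μ) {c : ℕ × ℕ} {k : ℕ} (hc : c ∈ μ) (h : T.entry c = k) :
    c = T.cellOf k := by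
  have hk : k ∈ Set.Icc 1 μ.card := h ▸ T.entry_mem hc
  exact T.bijOn.injOn hc (T.cellOf_mem hk) (by rw [h, T.entry_cellOf hk])

/-- content of the cell holding `k` -/
noncomputable def cont (T : SYT μ) (k : ℕ) : ℤ := cellContent (T.cellOf k)

end SYT

end Toolkit
section Toolkit2

namespace SYT

variable {μ : YoungDiagram}

lemma cont_eq (T : SYT μ) (k : ℕ) :
    T.cont k = ((T.cellOf k).2 : ℤ) - ((T.cellOf k).1 : ℤ) := rfl

/-- adjacency for consecutive entries in the same row -/
lemma adj_row (T : SYT μ) {k : ℕ} (hk : k ∈ Set.Icc 1 μ.card)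
    (hk1 : k + 1 ∈ Set.Icc 1 μ.card)
    (h : (T.cellOf k).1 = (T.cellOf (k+1)).1) :
    (T.cellOf (k+1)).2 = (T.cellOf k).2 + 1 := by
  have hma : T.cellOf k ∈ μ := T.cellOf_mem hk
  have hmb : T.cellOf (k+1) ∈ μ := T.cellOf_mem hk1
  have hea : T.entry (T.cellOf k) = k := T.entry_cellOf hk
  have heb : T.entry (T.cellOf (k+1)) = k + 1 := T.entry_cellOf hk1
  have hlt : (T.cellOf k).2 < (T.cellOf (k+1)).2 := by
    rcases lt_trichotomy (T.cellOf k).2 (T.cellOf (k+1)).2 with h' | h' | h'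
    · exact h'
    · exfalso
      have : T.cellOf k = T.cellOf (k+1) := Prod.ext h h'
      rw [this, heb] at hea; omega
    · have := T.row_strict _ _ hmb hma h.symm h'
      omega
  by_contra hne
  have hlt2 : (T.cellOf k).2 + 1 < (T.cellOf (k+1)).2 := by omega
  have hmid : ((T.cellOf k).1, (T.cellOf k).2 + 1) ∈ μ :=
    μ.lower_mem (le_of_eq h) (by simp; omega) hmb
  have h1 := T.row_strict (T.cellOf k) ((T.cellOf k).1, (T.cellOf k).2 + 1) hma hmid rfl (by simp)
  have h2 := T.row_strict ((T.cellOf k).1, (T.cellOf k).2 + 1) (T.cellOf (k+1)) hmid hmb (by simpa using h) (by simpa using hlt2)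
  omega

/-- adjacency for consecutive entries in the same column -/
lemma adj_col (T : SYT μ) {k : ℕ} (hk : k ∈ Set.Icc 1 μ.card)
    (hk1 : k + 1 ∈ Set.Icc 1 μ.card)
    (h : (T.cellOf k).2 = (T.cellOf (k+1)).2) :
    (T.cellOf (k+1)).1 = (T.cellOf k).1 + 1 := by
  have hma : T.cellOf k ∈ μ := T.cellOf_mem hk
  have hmb : T.cellOf (k+1) ∈ μ := T.cellOf_mem hk1
  have hea : T.entry (T.cellOf k) = k := T.entry_cellOf hk
  have heb : T.entry (T.cellOf (k+1)) = k + 1 := T.entry_cellOf hk1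
  have hlt : (T.cellOf k).1 < (T.cellOf (k+1)).1 := by
    rcases lt_trichotomy (T.cellOf k).1 (T.cellOf (k+1)).1 with h' | h' | h'
    · exact h'
    · exfalso
      have : T.cellOf k = T.cellOf (k+1) := Prod.ext h' h
      rw [this, heb] at hea; omega
    · have := T.col_strict _ _ hmb hma h.symm h'
      omega
  by_contra hne
  have hlt2 : (T.cellOf k).1 + 1 < (T.cellOf (k+1)).1 := by omega
  have hmid : ((T.cellOf k).1 + 1, (T.cellOf k).2) ∈ μ :=
    μ.lower_mem (by simp; omega) (le_of_eq h) hmb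
  have h1 := T.col_strict (T.cellOf k) ((T.cellOf k).1 + 1, (T.cellOf k).2) hma hmid rfl (by simp)
  have h2 := T.col_strict ((T.cellOf k).1 + 1, (T.cellOf k).2) (T.cellOf (k+1)) hmid hmb (by simpa using h) (by simpa using hlt2)
  omega

/-- trichotomy for the cells of consecutive entries -/
lemma consec (T : SYT μ) {k : ℕ} (hk : k ∈ Set.Icc 1 μ.card)
    (hk1 : k + 1 ∈ Set.Icc 1 μ.card) :
    ((T.cellOf k).1 < (T.cellOf (k+1)).1 ∧ (T.cellOf (k+1)).2 ≤ (T.cellOf k).2 ∧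
      T.cont (k+1) < T.cont k) ∨
    ((T.cellOf (k+1)).1 < (T.cellOf k).1 ∧ (T.cellOf k).2 < (T.cellOf (k+1)).2 ∧
      T.cont k < T.cont (k+1)) ∨
    ((T.cellOf k).1 = (T.cellOf (k+1)).1 ∧ T.cont (k+1) = T.cont k + 1) := by
  have hma : T.cellOf k ∈ μ := T.cellOf_mem hk
  have hmb : T.cellOf (k+1) ∈ μ := T.cellOf_mem hk1
  have hea : T.entry (T.cellOf k) = k := T.entry_cellOf hk
  have heb : T.entry (T.cellOf (k+1)) = k + 1 := T.entry_cellOf hk1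
  have hca := T.cont_eq k
  have hcb := T.cont_eq (k+1)
  rcases lt_trichotomy (T.cellOf k).1 (T.cellOf (k+1)).1 with h | h | h
  · left
    refine ⟨h, ?_⟩
    have hba : (T.cellOf (k+1)).2 ≤ (T.cellOf k).2 := by
      by_contra hc
      push_neg at hc
      have hmid : ((T.cellOf k).1, (T.cellOf (k+1)).2) ∈ μ :=
        μ.lower_mem (le_of_lt h) le_rfl hmb
      have h1 := T.row_strict _ _ hma hmid rfl hc
      have h2 := T.col_strict _ _ hmid hmb rfl h
      omega
    exact ⟨hba, by omega⟩
  · right; right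
    refine ⟨h, ?_⟩
    have := T.adj_row hk hk1 h
    omega
  · right; left
    refine ⟨h, ?_⟩
    have hba : (T.cellOf k).2 < (T.cellOf (k+1)).2 := by
      by_contra hc
      push_neg at hc
      have := T.entry_lt_entry hmb hma (le_of_lt h) hc
        (by intro hab; rw [hab, hea] at heb; omega)
      omega
    exact ⟨hba, by omega⟩

lemma cont_ne (T : SYT μ) {k : ℕ} (hk : k ∈ Set.Icc 1 μ.card)
    (hk1 : k + 1 ∈ Set.Icc 1 μ.card) : T.cont k ≠ T.cont (k+1) := by
  rcases T.consec hk hk1 with ⟨_, _, h⟩ | ⟨_, _, h⟩ | ⟨_, h⟩ <;> omega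

/-- Desc in terms of contents -/
lemma desc_iff_cont (T : SYT μ) {k : ℕ} (hk : k ∈ Set.Icc 1 μ.card)
    (hk1 : k + 1 ∈ Set.Icc 1 μ.card) :
    T.Desc k ↔ T.cont (k+1) < T.cont k := by
  have hrow : T.Desc k ↔ (T.cellOf k).1 < (T.cellOf (k+1)).1 := by
    constructor
    · rintro ⟨a, b, hma, hmb, hea, heb, hab⟩
      rwa [T.eq_cellOf hma hea, T.eq_cellOf hmb heb] at hab
    · intro h
      exact ⟨T.cellOf k, T.cellOf (k+1), T.cellOf_mem hk, T.cellOf_mem hk1,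
        T.entry_cellOf hk, T.entry_cellOf hk1, h⟩
  rw [hrow]
  rcases T.consec hk hk1 with ⟨h1, _, h2⟩ | ⟨h1, _, h2⟩ | ⟨h1, h2⟩ <;>
    constructor <;> intro h <;> omega

/-- consecutive entries whose contents differ by at least 2 occupy different
rows and different columns -/
lemma rows_cols_ne (T : SYT μ) {k : ℕ} (hk : k ∈ Set.Icc 1 μ.card)
    (hk1 : k + 1 ∈ Set.Icc 1 μ.card)
    (hgap : T.cont k + 2 ≤ T.cont (k+1) ∨ T.cont (k+1) + 2 ≤ T.cont k) :
    (T.cellOf k).1 ≠ (T.cellOf (k+1)).1 ∧ (T.cellOf k).2 ≠ (T.cellOf (k+1)).2 := by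
  have hca := T.cont_eq k
  have hcb := T.cont_eq (k+1)
  constructor
  · intro h
    have := T.adj_row hk hk1 h
    omega
  · intro h
    have := T.adj_col hk hk1 h
    omega

end SYT

end Toolkit2
section Toolkit3

namespace SYT

variable {μ : YoungDiagram}

lemma swap_fix {j x : ℕ} (h1 : x ≠ j) (h2 : x ≠ j + 1) :
    Equiv.swap j (j+1) x = x := Equiv.swap_apply_of_ne_of_ne h1 h2

lemma swap_lt {j u v : ℕ} (huv : u < v) (h : ¬(u = j ∧ v = j + 1)) :
    Equiv.swap j (j+1) u < Equiv.swap j (j+1) v := by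
  rcases eq_or_ne u j with hu | hu
  · subst hu
    have hv : v ≠ u + 1 := fun hc => h ⟨rfl, hc⟩
    rw [Equiv.swap_apply_left, swap_fix (by omega) (by omega)]
    omega
  · rcases eq_or_ne u (j+1) with hu' | hu'
    · subst hu'
      rw [Equiv.swap_apply_right, swap_fix (by omega) (by omega)]
      omega
    · rw [swap_fix hu hu']
      rcases eq_or_ne v j with hv | hv
      · subst hv; rw [Equiv.swap_apply_left]; omega
      · rcases eq_or_ne v (j+1) with hv' | hv'
        · subst hv'; rw [Equiv.swap_apply_right]; omega
        · rw [swap_fix hv hv']; exact huv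

lemma swap_mem_Icc {j x m : ℕ} (hj : j ∈ Set.Icc 1 m) (hj1 : j + 1 ∈ Set.Icc 1 m)
    (hx : x ∈ Set.Icc 1 m) : Equiv.swap j (j+1) x ∈ Set.Icc 1 m := by
  rcases eq_or_ne x j with h | h
  · subst h; rw [Equiv.swap_apply_left]; exact hj1
  · rcases eq_or_ne x (j+1) with h' | h'
    · subst h'; rw [Equiv.swap_apply_right]; exact hj
    · rw [swap_fix h h']; exact hx

/-- the tableau obtained by exchanging the entries `j` and `j+1`, provided
they are in different rows and different columns -/
lemma exists_swapped (T : SYT μ) {j : ℕ} (hj : j ∈ Set.Icc 1 μ.card)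
    (hj1 : j + 1 ∈ Set.Icc 1 μ.card)
    (hrow : (T.cellOf j).1 ≠ (T.cellOf (j+1)).1)
    (hcol : (T.cellOf j).2 ≠ (T.cellOf (j+1)).2) :
    ∃ U : SYT μ, ∀ c, U.entry c = Equiv.swap j (j+1) (T.entry c) := by
  have key : ∀ a b : ℕ × ℕ, a ∈ μ → b ∈ μ → T.entry a < T.entry b →
      (a.1 = b.1 ∨ a.2 = b.2) →
      Equiv.swap j (j+1) (T.entry a) < Equiv.swap j (j+1) (T.entry b) := by
    intro a b hma hmb hab hrc
    refine swap_lt hab fun ⟨h1, h2⟩ => ?_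
    have ha' : a = T.cellOf j := T.eq_cellOf hma h1
    have hb' : b = T.cellOf (j+1) := T.eq_cellOf hmb h2
    rw [ha', hb'] at hrc
    rcases hrc with h | h
    · exact hrow h
    · exact hcol h
  refine ⟨⟨fun c => Equiv.swap j (j+1) (T.entry c), ?_, ?_, ?_, ?_⟩, fun c => rfl⟩
  · refine ⟨fun c hc => swap_mem_Icc hj hj1 (T.bijOn.mapsTo hc), ?_, ?_⟩
    · intro a ha b hb hab
      exact T.bijOn.injOn ha hb ((Equiv.swap j (j+1)).injective hab)
    · intro k hk
      obtain ⟨c, hc, hc'⟩ := T.bijOn.surjOn (swap_mem_Icc hj hj1 hk)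
      refine ⟨c, hc, ?_⟩
      simp only [hc', Equiv.swap_apply_self]
  · intro c hc
    have hj' : 1 ≤ j := hj.1
    show Equiv.swap j (j+1) (T.entry c) = 0
    rw [T.zero_of_not_mem c hc, swap_fix (by omega) (by omega)]
  · intro a b hma hmb hr hc
    exact key a b hma hmb (T.row_strict a b hma hmb hr hc) (Or.inl hr)
  · intro a b hma hmb hc hr
    exact key a b hma hmb (T.col_strict a b hma hmb hc hr) (Or.inr hc)

/-- descents away from the swapped values are unchanged -/
lemma desc_congr {T U : SYT μ} {j m : ℕ}
    (hE : ∀ c, U.entry c = Equiv.swap j (j+1) (T.entry c))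
    (h1 : m ≠ j) (h2 : m ≠ j + 1) (h3 : m + 1 ≠ j) (h4 : m + 1 ≠ j + 1) :
    T.Desc m ↔ U.Desc m := by
  have ha : ∀ c, T.entry c = m ↔ U.entry c = m := by
    intro c
    rw [hE c]
    constructor
    · intro h; rw [h, swap_fix h1 h2]
    · intro h
      have := congrArg (Equiv.swap j (j+1)) h
      rw [Equiv.swap_apply_self, swap_fix h1 h2] at this
      exact this
  have hb : ∀ c, T.entry c = m + 1 ↔ U.entry c = m + 1 := by
    intro c
    rw [hE c]
    constructor
    · intro h; rw [h, swap_fix h3 h4]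
    · intro h
      have := congrArg (Equiv.swap j (j+1)) h
      rw [Equiv.swap_apply_self, swap_fix h3 h4] at this
      exact this
  constructor
  · rintro ⟨a, b, hma, hmb, hea, heb, hab⟩
    exact ⟨a, b, hma, hmb, (ha a).mp hea, (hb b).mp heb, hab⟩
  · rintro ⟨a, b, hma, hmb, hea, heb, hab⟩
    exact ⟨a, b, hma, hmb, (ha a).mpr hea, (hb b).mpr heb, hab⟩

lemma cellOf_swap_left {T U : SYT μ} {j : ℕ}
    (hE : ∀ c, U.entry c = Equiv.swap j (j+1) (T.entry c))
    (hj1 : j + 1 ∈ Set.Icc 1 μ.card) :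
    U.cellOf j = T.cellOf (j+1) := by
  refine (U.eq_cellOf (T.cellOf_mem hj1) ?_).symm
  rw [hE, T.entry_cellOf hj1, Equiv.swap_apply_right]

lemma cellOf_swap_right {T U : SYT μ} {j : ℕ}
    (hE : ∀ c, U.entry c = Equiv.swap j (j+1) (T.entry c))
    (hj : j ∈ Set.Icc 1 μ.card) :
    U.cellOf (j+1) = T.cellOf j := by
  refine (U.eq_cellOf (T.cellOf_mem hj) ?_).symm
  rw [hE, T.entry_cellOf hj, Equiv.swap_apply_left]

lemma cellOf_swap_other {T U : SYT μ} {j m : ℕ}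
    (hE : ∀ c, U.entry c = Equiv.swap j (j+1) (T.entry c))
    (hm : m ∈ Set.Icc 1 μ.card) (h1 : m ≠ j) (h2 : m ≠ j + 1) :
    U.cellOf m = T.cellOf m := by
  refine (U.eq_cellOf (T.cellOf_mem hm) ?_).symm
  rw [hE, T.entry_cellOf hm, swap_fix h1 h2]

/-- entry relation is symmetric -/
lemma swap_entry_symm {T U : SYT μ} {j : ℕ}
    (hE : ∀ c, U.entry c = Equiv.swap j (j+1) (T.entry c)) :
    ∀ c, T.entry c = Equiv.swap j (j+1) (U.entry c) := by
  intro c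
  rw [hE c, Equiv.swap_apply_self]

end SYT

end Toolkit3
section Toolkit4

namespace SYT

variable {μ : YoungDiagram}

lemma swap_idx_of_activ {T U : SYT μ} {i j : ℕ}
    (hE : ∀ c, U.entry c = Equiv.swap j (j+1) (T.entry c))
    (hact : T.Activ U i) : j = i ∨ j = i + 1 := by
  have hd1 : ¬(T.Desc i ↔ U.Desc i) := by
    rcases hact with ⟨h1, h2, _, _⟩ | ⟨h1, h2, _, _⟩ <;> tauto
  have hd2 : ¬(T.Desc (i+1) ↔ U.Desc (i+1)) := by
    rcases hact with ⟨_, _, h3, h4⟩ | ⟨_, _, h3, h4⟩ <;> tauto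
  have c1 : ¬(i ≠ j ∧ i ≠ j + 1 ∧ i + 1 ≠ j ∧ i + 1 ≠ j + 1) := by
    rintro ⟨a1, a2, a3, a4⟩
    exact hd1 (desc_congr hE a1 a2 a3 a4)
  have c2 : ¬(i + 1 ≠ j ∧ i + 1 ≠ j + 1 ∧ i + 2 ≠ j ∧ i + 2 ≠ j + 1) := by
    rintro ⟨a1, a2, a3, a4⟩
    exact hd2 (desc_congr hE a1 a2 a3 a4)
  omega

/-- `Activ i` characterization when the edge swaps `i` and `i+1`:
the content of `i+2` lies strictly between those of `i` and `i+1`. -/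
lemma activ_high_iff {T U : SYT μ} {i : ℕ}
    (hE : ∀ c, U.entry c = Equiv.swap i (i+1) (T.entry c))
    (hi : 1 ≤ i) (hc : i + 2 ≤ μ.card) :
    T.Activ U i ↔
      ((T.cont i < T.cont (i+2) ∧ T.cont (i+2) < T.cont (i+1)) ∨
       (T.cont (i+1) < T.cont (i+2) ∧ T.cont (i+2) < T.cont i)) := by
  have hki : i ∈ Set.Icc 1 μ.card := ⟨hi, by omega⟩
  have hki1 : i + 1 ∈ Set.Icc 1 μ.card := ⟨by omega, by omega⟩
  have hki2 : i + 2 ∈ Set.Icc 1 μ.card := ⟨by omega, hc⟩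
  have hU1 : U.cont i = T.cont (i+1) := by
    rw [cont, cellOf_swap_left hE hki1]; rfl
  have hU2 : U.cont (i+1) = T.cont i := by
    rw [cont, cellOf_swap_right hE hki]; rfl
  have hU3 : U.cont (i+2) = T.cont (i+2) := by
    rw [cont, cellOf_swap_other hE hki2 (by omega) (by omega)]; rfl
  have hne1 : T.cont i ≠ T.cont (i+1) := T.cont_ne hki hki1
  have hne2 : T.cont (i+1) ≠ T.cont (i+2) := T.cont_ne hki1 hki2
  have hne3 : T.cont i ≠ T.cont (i+2) := by
    have := U.cont_ne hki1 hki2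
    rw [hU2, hU3] at this
    exact this
  have hqT : T.cont (i+1+1) = T.cont (i+2) := rfl
  have hqU : U.cont (i+1+1) = U.cont (i+2) := rfl
  have e1 := T.desc_iff_cont hki hki1
  have e2 := U.desc_iff_cont hki hki1
  have e3 := T.desc_iff_cont hki1 hki2
  have e4 := U.desc_iff_cont hki1 hki2
  rw [hqT] at e3
  rw [hqU] at e4
  rw [hU1, hU2] at e2
  rw [hU2, hU3] at e4
  unfold SYT.Activ
  rw [e1, e2, e3, e4]
  constructor
  · rintro (⟨h1, h2, h3, h4⟩ | ⟨h1, h2, h3, h4⟩) <;> omega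
  · rintro (⟨h1, h2⟩ | ⟨h1, h2⟩) <;> omega

/-- `Activ i` characterization when the edge swaps `i+1` and `i+2`:
the content of `i` lies strictly between those of `i+1` and `i+2`. -/
lemma activ_low_iff {T U : SYT μ} {i : ℕ}
    (hE : ∀ c, U.entry c = Equiv.swap (i+1) (i+1+1) (T.entry c))
    (hi : 1 ≤ i) (hc : i + 2 ≤ μ.card) :
    T.Activ U i ↔
      ((T.cont (i+1) < T.cont i ∧ T.cont i < T.cont (i+2)) ∨
       (T.cont (i+2) < T.cont i ∧ T.cont i < T.cont (i+1))) := by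
  have hki : i ∈ Set.Icc 1 μ.card := ⟨hi, by omega⟩
  have hki1 : i + 1 ∈ Set.Icc 1 μ.card := ⟨by omega, by omega⟩
  have hki2 : i + 1 + 1 ∈ Set.Icc 1 μ.card := ⟨by omega, by omega⟩
  have hU1 : U.cont i = T.cont i := by
    rw [cont, cellOf_swap_other hE hki (by omega) (by omega)]; rfl
  have hU2 : U.cont (i+1) = T.cont (i+2) := by
    rw [cont, cellOf_swap_left hE hki2]; rfl
  have hU3 : U.cont (i+2) = T.cont (i+1) := by
    rw [cont, show U.cellOf (i+2) = T.cellOf (i+1) from cellOf_swap_right hE hki1]; rfl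
  have hne1 : T.cont i ≠ T.cont (i+1) := T.cont_ne hki hki1
  have hne2 : T.cont (i+1) ≠ T.cont (i+2) := by
    have := T.cont_ne hki1 hki2
    exact this
  have hne3 : T.cont i ≠ T.cont (i+2) := by
    have := U.cont_ne hki hki1
    rw [hU1, hU2] at this
    exact this
  have hqT : T.cont (i+1+1) = T.cont (i+2) := rfl
  have hqU : U.cont (i+1+1) = U.cont (i+2) := rfl
  have e1 := T.desc_iff_cont hki hki1
  have e2 := U.desc_iff_cont hki hki1
  have e3 := T.desc_iff_cont hki1 hki2
  have e4 := U.desc_iff_cont hki1 hki2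
  rw [hqT] at e3
  rw [hqU] at e4
  rw [hU1, hU2] at e2
  rw [hU2, hU3] at e4
  rw [hqT] at e3
  unfold SYT.Activ
  rw [e1, e2, e3, e4]
  constructor
  · rintro (⟨h1, h2, h3, h4⟩ | ⟨h1, h2, h3, h4⟩) <;> omega
  · rintro (⟨h1, h2⟩ | ⟨h1, h2⟩) <;> omega

end SYT

end Toolkit4
section Toolkit5

/-- removable corner of a set of cells -/
def CornerOf (A : Set (ℕ × ℕ)) (e : ℕ × ℕ) : Prop :=
  e ∈ A ∧ (e.1 + 1, e.2) ∉ A ∧ (e.1, e.2 + 1) ∉ A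

/-- addable cell: not in `A`, but everything strictly below-left of it is -/
def AddableTo (A : Set (ℕ × ℕ)) (p : ℕ × ℕ) : Prop :=
  p ∉ A ∧ ∀ y : ℕ × ℕ, y.1 ≤ p.1 → y.2 ≤ p.2 → y ≠ p → y ∈ A

/-- Between two addable cells there is a removable corner with content
strictly in between. -/
lemma corner_between {A : Set (ℕ × ℕ)} (hfin : A.Finite)
    (hlow : ∀ x y : ℕ × ℕ, x.1 ≤ y.1 → x.2 ≤ y.2 → y ∈ A → x ∈ A)
    {p q : ℕ × ℕ} (hp : AddableTo A p) (hq : AddableTo A q)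
    (hgap : cellContent p + 2 ≤ cellContent q) :
    ∃ e, CornerOf A e ∧ cellContent p < cellContent e ∧
      cellContent e < cellContent q := by
  obtain ⟨rp, cp⟩ := p
  obtain ⟨rq, cq⟩ := q
  simp only [cellContent] at hgap
  have hr : rq < rp := by
    by_contra hc
    push_neg at hc
    exact hp.1 (hq.2 (rp, cp) hc (by omega) (by simp; omega))
  have hcc : cp < cq := by
    by_contra hc
    push_neg at hc
    exact hq.1 (hp.2 (rq, cq) (by omega) hc (by simp; omega))
  have hbase : (rq, cq - 1) ∈ A :=
    hq.2 (rq, cq - 1) le_rfl (by omega) (by simp; omega)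
  have hex : ∃ r, (r, cq - 1) ∉ A := by
    by_contra hc
    push_neg at hc
    have hinf : Set.Infinite ((fun r => ((r, cq - 1) : ℕ × ℕ)) '' Set.univ) :=
      Set.Infinite.image (fun a _ b _ hab => by simpa using hab)
        Set.infinite_univ
    exact hinf (hfin.subset (by rintro x ⟨r, -, rfl⟩; exact hc r))
  classical
  obtain ⟨rs, hmem, hnot⟩ : ∃ rs, (rs, cq - 1) ∈ A ∧ (rs + 1, cq - 1) ∉ A := by
    obtain ⟨r0, hr0⟩ := hex
    induction r0 with
    | zero => exact absurd (hlow (0, cq - 1) (rq, cq - 1) (by omega) le_rfl hbase) hr0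
    | succ r ih =>
      by_cases h : (r, cq - 1) ∈ A
      · exact ⟨r, h, hr0⟩
      · exact ih h
  have hrsq : rq ≤ rs := by
    by_contra hc
    push_neg at hc
    exact hnot (hlow (rs + 1, cq - 1) (rq, cq - 1) (by omega) le_rfl hbase)
  have hrsp : rs < rp := by
    by_contra hc
    push_neg at hc
    have h1 : (rp, cq - 1) ∈ A := hlow (rp, cq - 1) (rs, cq - 1) (by omega) le_rfl hmem
    exact hp.1 (hlow (rp, cp) (rp, cq - 1) le_rfl (by simp; omega) h1)
  refine ⟨(rs, cq - 1), ⟨hmem, hnot, ?_⟩, ?_, ?_⟩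
  · intro hc
    exact hq.1 (hlow (rq, cq) (rs, cq - 1 + 1) hrsq (by simp; omega) (by simpa using hc))
  · simp only [cellContent]; omega
  · simp only [cellContent]; omega

end Toolkit5
section Toolkit6

variable {n : ℕ} {lam : YoungDiagram}

lemma std_beta_iff {T U : SYT lam} {i : ℕ} :
    i ∈ (stdSCG n lam).β T U ↔
      (i ∈ Set.Icc 1 (n-1) ∧ (T ≠ U ∧ (T.DKEdge U ∨ U.DKEdge T)) ∧ T.Activ U i) :=
  Iff.rfl

lemma std_E_iff {T U : SYT lam} :
    (stdSCG n lam).E T U ↔ (T ≠ U ∧ (T.DKEdge U ∨ U.DKEdge T)) :=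
  Iff.rfl

lemma dk_normalize {T U : SYT lam} (h : T.DKEdge U ∨ U.DKEdge T) :
    ∃ j, 1 ≤ j ∧ ∀ c, U.entry c = Equiv.swap j (j+1) (T.entry c) := by
  rcases h with ⟨j, hj, hE, -⟩ | ⟨j, hj, hE, -⟩
  · exact ⟨j, hj, hE⟩
  · exact ⟨j, hj, SYT.swap_entry_symm hE⟩

/-- from a β-label, the normalized swap with its index pinned down -/
lemma beta_swap {T U : SYT lam} {i : ℕ} (h : i ∈ (stdSCG n lam).β T U) :
    ∃ j, (j = i ∨ j = i + 1) ∧ ∀ c, U.entry c = Equiv.swap j (j+1) (T.entry c) := by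
  obtain ⟨-, ⟨-, hdk⟩, hact⟩ := std_beta_iff.mp h
  obtain ⟨j, -, hE⟩ := dk_normalize hdk
  exact ⟨j, SYT.swap_idx_of_activ hE hact, hE⟩

/-- uniqueness of the `(n-1)`-neighbor in the standard graph -/
lemma nbr_unique (hlam : lam.card = n + 1) (hn : 2 ≤ n) {Y W1 W2 : SYT lam}
    (h1 : (n-1) ∈ (stdSCG n lam).β Y W1) (h2 : (n-1) ∈ (stdSCG n lam).β Y W2) :
    W1 = W2 := by
  obtain ⟨m, rfl⟩ : ∃ m, n = m + 1 := ⟨n - 1, by omega⟩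
  have hm : m + 1 - 1 = m := by omega
  rw [hm] at h1 h2
  have hact1 : Y.Activ W1 m := (std_beta_iff.mp h1).2.2
  have hact2 : Y.Activ W2 m := (std_beta_iff.mp h2).2.2
  obtain ⟨j1, hj1, hE1⟩ := beta_swap h1
  obtain ⟨j2, hj2, hE2⟩ := beta_swap h2
  have hm1 : 1 ≤ m := by
    -- if m = 0 then j among {0, 1}: but Activ 0 requires Desc 0: entry 0 is impossible?
    -- easier: m ∈ Icc 1 (m+1-1) from the label membership
    have := (std_beta_iff.mp h1).1
    rw [hm] at this
    exact this.1
  have hcard : m + 2 ≤ lam.card := by omega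
  have key : ∀ (W W' : SYT lam), Y.Activ W m →
      (∀ c, W.entry c = Equiv.swap m (m+1) (Y.entry c)) →
      Y.Activ W' m →
      (∀ c, W'.entry c = Equiv.swap (m+1) (m+1+1) (Y.entry c)) → False := by
    intro W W' hactW hEW hactW' hEW'
    have hhigh := (SYT.activ_high_iff hEW hm1 hcard).mp hactW
    have hlow := (SYT.activ_low_iff hEW' hm1 hcard).mp hactW'
    rcases hhigh with ⟨a1, a2⟩ | ⟨a1, a2⟩ <;> rcases hlow with ⟨b1, b2⟩ | ⟨b1, b2⟩ <;> omega
  rcases hj1 with rfl | rfl <;> rcases hj2 with rfl | rfl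
  · exact SYT.ext' (funext fun c => by rw [hE1 c, hE2 c])
  · exact absurd (key W1 W2 hact1 hE1 hact2 hE2) (by simp)
  · exact absurd (key W2 W1 hact2 hE2 hact1 hE1) (by simp)
  · exact SYT.ext' (funext fun c => by rw [hE1 c, hE2 c])

/-- a label `c` on an edge pins the swap to `{c, c+1}`; hence edges with a
label `≤ n-2` do not move the top entry `n+1`. -/
lemma entry_top_eq_of_low_label (hlam : lam.card = n + 1) {T U : SYT lam} {c : ℕ}
    (h : c ∈ (stdSCG n lam).β T U) (hc : c ≤ n - 2) (hn : 2 ≤ n) :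
    ∀ x, (T.entry x = n + 1 ↔ U.entry x = n + 1) := by
  obtain ⟨j, hj, hE⟩ := beta_swap h
  have hc1 : 1 ≤ c := ((std_beta_iff.mp h).1).1
  have hjn : j + 1 ≤ n := by omega
  intro x
  rw [hE x]
  constructor
  · intro hx
    rw [hx, SYT.swap_fix (by omega) (by omega)]
  · intro hx
    have := congrArg (Equiv.swap j (j+1)) hx
    rw [Equiv.swap_apply_self, SYT.swap_fix (by omega) (by omega)] at this
    exact this

end Toolkit6
section Toolkit7

variable {lam : YoungDiagram}

/-- the cells holding entries `≤ k` -/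
def Dset (X : SYT lam) (k : ℕ) : Set (ℕ × ℕ) := {c | c ∈ lam ∧ X.entry c ≤ k}

lemma Dset_lower (X : SYT lam) (k : ℕ) :
    ∀ x y : ℕ × ℕ, x.1 ≤ y.1 → x.2 ≤ y.2 → y ∈ Dset X k → x ∈ Dset X k := by
  rintro x y h1 h2 ⟨hy, hey⟩
  have hx : x ∈ lam := lam.lower_mem h1 h2 hy
  exact ⟨hx, le_trans (X.entry_le_entry hx hy h1 h2) hey⟩

lemma Dset_finite (X : SYT lam) (k : ℕ) : (Dset X k).Finite :=
  Set.Finite.subset lam.cells.finite_toSet (fun c hc => hc.1)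

lemma Dset_mono (X : SYT lam) {k k' : ℕ} (h : k ≤ k') : Dset X k ⊆ Dset X k' :=
  fun c hc => ⟨hc.1, le_trans hc.2 h⟩

lemma mem_Dset_self (X : SYT lam) {k : ℕ} (hk : k ∈ Set.Icc 1 lam.card) :
    X.cellOf k ∈ Dset X k :=
  ⟨X.cellOf_mem hk, le_of_eq (X.entry_cellOf hk)⟩

/-- the cell of `k` is a corner of `Dset X k` -/
lemma corner_cellOf (X : SYT lam) {k : ℕ} (hk : k ∈ Set.Icc 1 lam.card) :
    CornerOf (Dset X k) (X.cellOf k) := by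
  refine ⟨mem_Dset_self X hk, ?_, ?_⟩
  · rintro ⟨hm, he⟩
    have := X.col_strict (X.cellOf k) ((X.cellOf k).1 + 1, (X.cellOf k).2)
      (X.cellOf_mem hk) hm rfl (by simp)
    rw [X.entry_cellOf hk] at this
    omega
  · rintro ⟨hm, he⟩
    have := X.row_strict (X.cellOf k) ((X.cellOf k).1, (X.cellOf k).2 + 1)
      (X.cellOf_mem hk) hm rfl (by simp)
    rw [X.entry_cellOf hk] at this
    omega

/-- distinct corners of a lower set occupy different rows and columns, and
their contents differ by at least 2 -/
lemma corners_distinct {A : Set (ℕ × ℕ)}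
    (hlow : ∀ x y : ℕ × ℕ, x.1 ≤ y.1 → x.2 ≤ y.2 → y ∈ A → x ∈ A)
    {d e : ℕ × ℕ} (hd : CornerOf A d) (he : CornerOf A e) (hne : d ≠ e) :
    d.1 ≠ e.1 ∧ d.2 ≠ e.2 ∧
      (cellContent d + 2 ≤ cellContent e ∨ cellContent e + 2 ≤ cellContent d) := by
  obtain ⟨d1, d2⟩ := d
  obtain ⟨e1, e2⟩ := e
  simp only [cellContent]
  have hrow : d1 ≠ e1 := by
    rintro rfl
    rcases lt_trichotomy d2 e2 with h | h | h
    · exact hd.2.2 (hlow (d1, d2 + 1) (d1, e2) le_rfl (by simp; omega) he.1)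
    · exact hne (by rw [h])
    · exact he.2.2 (hlow (d1, e2 + 1) (d1, d2) le_rfl (by simp; omega) hd.1)
  have hcol : d2 ≠ e2 := by
    rintro rfl
    rcases lt_trichotomy d1 e1 with h | h | h
    · exact hd.2.1 (hlow (d1 + 1, d2) (e1, d2) (by simp; omega) le_rfl he.1)
    · exact hne (by rw [h])
    · exact he.2.1 (hlow (e1 + 1, d2) (d1, d2) (by simp; omega) le_rfl hd.1)
  refine ⟨hrow, hcol, ?_⟩
  rcases lt_trichotomy d1 e1 with h | h | h
  · -- d above e; then d2 > e2, else (d1+1, d2) ≤ e would be in A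
    have h2 : e2 < d2 := by
      by_contra hc
      push_neg at hc
      exact hd.2.1 (hlow (d1 + 1, d2) (e1, e2) (by simp; omega) (by simp; omega) he.1)
    right; omega
  · exact absurd h hrow
  · have h2 : d2 < e2 := by
      by_contra hc
      push_neg at hc
      exact he.2.1 (hlow (e1 + 1, e2) (d1, d2) (by simp; omega) (by simp; omega) hd.1)
    left; omega

/-- if entries above `m` occupy the same cells, the low sets agree -/
lemma Dset_congr {X Y : SYT lam} {m : ℕ}
    (hpres : ∀ c, (m < X.entry c ∨ m < Y.entry c) → Y.entry c = X.entry c)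
    {k : ℕ} (hk : m ≤ k) : Dset X k = Dset Y k := by
  ext c
  constructor
  · rintro ⟨hc, he⟩
    refine ⟨hc, ?_⟩
    by_contra hy
    push_neg at hy
    have := hpres c (Or.inr (by omega))
    omega
  · rintro ⟨hc, he⟩
    refine ⟨hc, ?_⟩
    by_contra hy
    push_neg at hy
    have := hpres c (Or.inl (by omega))
    omega

lemma pres_trans {X Y Z : SYT lam} {m m' : ℕ}
    (h1 : ∀ c, (m < X.entry c ∨ m < Y.entry c) → Y.entry c = X.entry c)
    (h2 : ∀ c, (m' < Y.entry c ∨ m' < Z.entry c) → Z.entry c = Y.entry c)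
    (hm : m' ≤ m) :
    ∀ c, (m < X.entry c ∨ m < Z.entry c) → Z.entry c = X.entry c := by
  intro c hc
  rcases hc with h | h
  · have e1 : Y.entry c = X.entry c := h1 c (Or.inl h)
    have e2 : Z.entry c = Y.entry c := h2 c (Or.inl (by omega))
    rw [e2, e1]
  · have e2 : Z.entry c = Y.entry c := h2 c (Or.inr (by omega))
    have e1 : Y.entry c = X.entry c := h1 c (Or.inr (by omega))
    rw [e2, e1]

/-- the entry 1 sits at the origin -/
lemma cellOf_one (X : SYT lam) (h1 : 1 ∈ Set.Icc 1 lam.card) : X.cellOf 1 = (0, 0) := by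
  set e := X.cellOf 1 with he
  have hm : e ∈ lam := X.cellOf_mem h1
  have hent : X.entry e = 1 := X.entry_cellOf h1
  obtain ⟨e1, e2⟩ := e
  have h1' : e1 = 0 := by
    by_contra hc
    have hy : (e1 - 1, e2) ∈ lam := lam.lower_mem (y := (e1, e2)) (by simp) le_rfl hm
    have := X.entry_lt_entry hy hm (by simp) le_rfl (by simp; omega)
    have := X.one_le_entry hy
    omega
  have h2' : e2 = 0 := by
    by_contra hc
    have hy : (e1, e2 - 1) ∈ lam := lam.lower_mem (y := (e1, e2)) le_rfl (by simp) hm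
    have := X.entry_lt_entry hy hm le_rfl (by simp) (by simp; omega)
    have := X.one_le_entry hy
    omega
  simp [h1', h2']

/-- the entry 2 sits next to the origin -/
lemma cellOf_two (X : SYT lam) (h2 : 2 ∈ Set.Icc 1 lam.card) :
    X.cellOf 2 = (0, 1) ∨ X.cellOf 2 = (1, 0) := by
  have h1 : 1 ∈ Set.Icc 1 lam.card := ⟨le_rfl, by have := h2.2; omega⟩
  have hone := cellOf_one X h1
  set d := X.cellOf 2 with hd
  have hm : d ∈ lam := X.cellOf_mem h2
  have hent : X.entry d = 2 := X.entry_cellOf h2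
  obtain ⟨d1, d2⟩ := d
  have hno : ¬(d1 = 0 ∧ d2 = 0) := by
    rintro ⟨rfl, rfl⟩
    rw [show ((0:ℕ), (0:ℕ)) = X.cellOf 1 from hone.symm, X.entry_cellOf h1] at hent
    omega
  have key : ∀ y : ℕ × ℕ, y ∈ lam → y.1 ≤ d1 → y.2 ≤ d2 → y ≠ (d1, d2) → y = (0, 0) := by
    intro y hy hy1 hy2 hyne
    have hlt := X.entry_lt_entry hy hm hy1 hy2 hyne
    have hge := X.one_le_entry hy
    have : X.entry y = 1 := by omega
    rw [X.eq_cellOf hy this, hone]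
  by_cases hd1 : d1 = 0
  · subst hd1
    left
    have : d2 ≠ 0 := fun hc => hno ⟨rfl, hc⟩
    by_contra hc
    have hd2 : 2 ≤ d2 := by
      rcases Nat.lt_or_ge d2 2 with h | h
      · interval_cases d2
        · omega
        · exact absurd rfl hc
      · exact h
    have k1 := key (0, 1) (lam.lower_mem (y := ((0:ℕ), d2)) le_rfl (by simp; omega) hm) le_rfl (by simp; omega) (by simp; omega)
    simp at k1
  · right
    have hd1' : 1 ≤ d1 := by omega
    have k1 := key (d1 - 1, d2) (lam.lower_mem (y := (d1, d2)) (by simp) le_rfl hm) (by simp) le_rfl (by simp; omega)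
    have hd2 : d2 = 0 := by
      by_contra hc
      have k2 := key (d1, d2 - 1) (lam.lower_mem (y := (d1, d2)) le_rfl (by simp) hm) le_rfl (by simp) (by simp; omega)
      rw [Prod.ext_iff] at k1 k2
      simp at k1 k2
      omega
    subst hd2
    rw [Prod.ext_iff] at k1
    simp at k1
    have : d1 = 1 := by omega
    simp [this]

end Toolkit7
section MoveLemma

variable {n : ℕ} {lam : YoungDiagram}

lemma pres_mono {X Y : SYT lam} {m m' : ℕ} (hm : m ≤ m')
    (h : ∀ c, (m < X.entry c ∨ m < Y.entry c) → Y.entry c = X.entry c) :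
    ∀ c, (m' < X.entry c ∨ m' < Y.entry c) → Y.entry c = X.entry c := by
  intro c hc
  apply h
  rcases hc with h' | h'
  · exact Or.inl (by omega)
  · exact Or.inr (by omega)

lemma mem_Ioo_minmax {x a b : ℤ} (h : (a < x ∧ x < b) ∨ (b < x ∧ x < a)) :
    x ∈ Set.Ioo (min a b) (max a b) := by
  rcases le_total a b with hab | hab <;> rcases h with ⟨h1, h2⟩ | ⟨h1, h2⟩ <;>
    constructor <;>
    simp only [min_def, max_def] <;> split_ifs <;> omega

/-- the edges of `G_lam` carrying some label `≤ n-4` -/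
def Rrel (n : ℕ) (lam : YoungDiagram) (X Y : SYT lam) : Prop :=
  (stdSCG n lam).E X Y ∧ ∃ c, 1 ≤ c ∧ c ≤ n - 4 ∧ c ∈ (stdSCG n lam).β X Y

/-- The move lemma: entry `k` can be brought to any corner of its subdiagram
using edges labelled `≤ k - 2 ≤ n - 4`, without disturbing larger entries. -/
lemma Mlem (hlam : lam.card = n + 1) :
    ∀ k, 1 ≤ k → k ≤ n - 2 → ∀ X : SYT lam, ∀ e, CornerOf (Dset X k) e →
      ∃ Y : SYT lam, Relation.ReflTransGen (Rrel n lam) X Y ∧ Y.entry e = k ∧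
        ∀ c, (k < X.entry c ∨ k < Y.entry c) → Y.entry c = X.entry c := by
  intro k
  induction k using Nat.strong_induction_on with
  | _ k IH =>
  intro hk1 hk2 X e he
  have hkcard : k ≤ lam.card := by omega
  have hkIcc : k ∈ Set.Icc 1 lam.card := ⟨hk1, hkcard⟩
  by_cases hed : e = X.cellOf k
  · exact ⟨X, Relation.ReflTransGen.refl,
      (by rw [hed]; exact X.entry_cellOf hkIcc), fun c _ => rfl⟩
  obtain ⟨⟨heμ, hele⟩, hcor1, hcor2⟩ := he
  have hege : 1 ≤ X.entry e := X.one_le_entry heμ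
  rcases Nat.lt_or_ge k 3 with hk3 | hk3
  · exfalso
    interval_cases k
    · exact hed (X.eq_cellOf heμ (by omega))
    · rcases Nat.lt_or_ge (X.entry e) 2 with h | h
      · have hee : e = X.cellOf 1 := X.eq_cellOf heμ (by omega)
        have h1 : (1:ℕ) ∈ Set.Icc 1 lam.card := ⟨le_rfl, by omega⟩
        have heo := cellOf_one X h1
        have hdmem : X.cellOf 2 ∈ Dset X 2 := mem_Dset_self X hkIcc
        rcases cellOf_two X hkIcc with hd | hd
        · apply hcor2
          rw [hee, heo]
          rw [hd] at hdmem
          simpa using hdmem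
        · apply hcor1
          rw [hee, heo]
          rw [hd] at hdmem
          simpa using hdmem
      · exact hed (X.eq_cellOf heμ (by omega))
  · obtain ⟨k', rfl⟩ : ∃ k', k = k' + 2 := ⟨k - 2, by omega⟩
    have hk'1 : 1 ≤ k' := by omega
    have hdmem : X.cellOf (k'+2) ∈ lam := X.cellOf_mem hkIcc
    have hd_corner : CornerOf (Dset X (k'+2)) (X.cellOf (k'+2)) := corner_cellOf X hkIcc
    have hentd : X.entry (X.cellOf (k'+2)) = k' + 2 := X.entry_cellOf hkIcc
    have he' : CornerOf (Dset X (k'+1)) e := by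
      refine ⟨⟨heμ, ?_⟩, ?_, ?_⟩
      · have : X.entry e ≠ k' + 2 := fun h => hed (X.eq_cellOf heμ h)
        omega
      · exact fun h => hcor1 (Dset_mono X (by omega) h)
      · exact fun h => hcor2 (Dset_mono X (by omega) h)
    obtain ⟨X₁, hp1, he1, hpres1⟩ := IH (k'+1) (by omega) (by omega) (by omega) X e he'
    have hd1 : X₁.entry (X.cellOf (k'+2)) = k' + 2 := by
      rw [hpres1 _ (Or.inl (by rw [hentd]; omega)), hentd]
    have hcelle : X₁.cellOf (k'+1) = e := (X₁.eq_cellOf heμ he1).symm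
    have heD : CornerOf (Dset X (k'+2)) e := ⟨⟨heμ, hele⟩, hcor1, hcor2⟩
    obtain ⟨hrow, hcol, hgap⟩ :=
      corners_distinct (Dset_lower X (k'+2)) hd_corner heD (fun h => hed h.symm)
    -- addability in `Dset X₁ k'`
    have haddd : AddableTo (Dset X₁ k') (X.cellOf (k'+2)) := by
      constructor
      · rintro ⟨-, hle⟩
        rw [hd1] at hle; omega
      · intro y hy1 hy2 hyne
        have hyμ : y ∈ lam := lam.lower_mem hy1 hy2 hdmem
        have hylt : X₁.entry y < k' + 2 := by
          rw [← hd1]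
          exact X₁.entry_lt_entry hyμ hdmem hy1 hy2 hyne
        have hyne1 : X₁.entry y ≠ k' + 1 := by
          intro h
          have hye : y = e := by rw [X₁.eq_cellOf hyμ h, hcelle]
          subst hye
          apply hcor1
          refine Dset_lower X (k'+2) (y.1 + 1, y.2) (X.cellOf (k'+2))
            (by simp; omega) (by simpa using hy2) (mem_Dset_self X hkIcc)
        exact ⟨hyμ, by omega⟩
    have hadde : AddableTo (Dset X₁ k') e := by
      constructor
      · rintro ⟨-, hle⟩
        rw [he1] at hle; omega
      · intro y hy1 hy2 hyne
        have hyμ : y ∈ lam := lam.lower_mem hy1 hy2 heμ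
        have hylt : X₁.entry y < k' + 1 := by
          rw [← he1]
          exact X₁.entry_lt_entry hyμ heμ hy1 hy2 hyne
        exact ⟨hyμ, by omega⟩
    -- the in-between corner
    have hbetween : ∃ g, CornerOf (Dset X₁ k') g ∧
        ((cellContent (X.cellOf (k'+2)) < cellContent g ∧ cellContent g < cellContent e) ∨
         (cellContent e < cellContent g ∧ cellContent g < cellContent (X.cellOf (k'+2)))) := by
      rcases hgap with hg | hg
      · obtain ⟨g, hgc, h1, h2⟩ :=
          corner_between (Dset_finite X₁ k') (Dset_lower X₁ k') haddd hadde hg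
        exact ⟨g, hgc, Or.inl ⟨h1, h2⟩⟩
      · obtain ⟨g, hgc, h1, h2⟩ :=
          corner_between (Dset_finite X₁ k') (Dset_lower X₁ k') hadde haddd hg
        exact ⟨g, hgc, Or.inr ⟨h1, h2⟩⟩
    obtain ⟨g, hgcor, hbet⟩ := hbetween
    obtain ⟨X₂, hp2, hg2, hpres2⟩ := IH k' (by omega) (by omega) (by omega) X₁ g hgcor
    have hgμ : g ∈ lam := hgcor.1.1
    have hd2 : X₂.entry (X.cellOf (k'+2)) = k' + 2 :=
      by rw [hpres2 _ (Or.inl (by rw [hd1]; omega)), hd1]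
    have he2 : X₂.entry e = k' + 1 :=
      by rw [hpres2 _ (Or.inl (by rw [he1]; omega)), he1]
    have hjIcc : k' + 1 ∈ Set.Icc 1 lam.card := ⟨by omega, by omega⟩
    have hj1Icc : k' + 1 + 1 ∈ Set.Icc 1 lam.card := ⟨by omega, by omega⟩
    have hcell2e : X₂.cellOf (k'+1) = e := (X₂.eq_cellOf heμ he2).symm
    have hcell2d : X₂.cellOf (k'+1+1) = X.cellOf (k'+2) :=
      (X₂.eq_cellOf hdmem hd2).symm
    obtain ⟨Y, hEY⟩ := X₂.exists_swapped hjIcc hj1Icc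
      (by rw [hcell2e, hcell2d]; exact fun h => hrow h.symm)
      (by rw [hcell2e, hcell2d]; exact fun h => hcol h.symm)
    have hYe : Y.entry e = k' + 2 := by
      rw [hEY e, he2, Equiv.swap_apply_left]
    have hYd : Y.entry (X.cellOf (k'+2)) = k' + 1 := by
      rw [hEY _, hd2]
      exact Equiv.swap_apply_right _ _
    have hne : X₂ ≠ Y := by
      intro h
      rw [← h] at hYe
      omega
    have hdk : X₂.DKSwap Y (k'+1) := by
      refine ⟨by omega, hEY, e, X.cellOf (k'+2), g, heμ, hdmem, hgμ, he2, hd2, Or.inl (by rw [hg2]), ?_⟩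
      exact mem_Ioo_minmax (by rcases hbet with ⟨h1, h2⟩ | ⟨h1, h2⟩ <;> [right; left] <;> exact ⟨by omega, by omega⟩)
    have hact : X₂.Activ Y k' := by
      rw [SYT.activ_low_iff hEY hk'1 (by omega)]
      have c1 : X₂.cont (k'+1) = cellContent e := by rw [SYT.cont, hcell2e]
      have c2 : X₂.cont (k'+2) = cellContent (X.cellOf (k'+2)) := by
        rw [SYT.cont, show X₂.cellOf (k'+2) = X.cellOf (k'+2) from hcell2d]
      have c3 : X₂.cont k' = cellContent g := by
        rw [SYT.cont, show X₂.cellOf k' = g from (X₂.eq_cellOf hgμ hg2).symm]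
      rw [c1, c2, c3]
      rcases hbet with h | h
      · exact Or.inr h
      · exact Or.inl h
    have hbeta : k' ∈ (stdSCG n lam).β X₂ Y :=
      std_beta_iff.mpr ⟨⟨hk'1, by omega⟩, ⟨hne, Or.inl ⟨k'+1, hdk⟩⟩, hact⟩
    have hrrel : Rrel n lam X₂ Y := ⟨⟨hne, Or.inl ⟨k'+1, hdk⟩⟩, k', hk'1, by omega, hbeta⟩
    have pres3 : ∀ c, (k' + 2 < X₂.entry c ∨ k' + 2 < Y.entry c) →
        Y.entry c = X₂.entry c := by
      intro c hc
      have hx := hEY c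
      rcases eq_or_ne (X₂.entry c) (k'+1) with h1 | h1
      · exfalso
        rw [hx, h1, Equiv.swap_apply_left] at hc
        omega
      · rcases eq_or_ne (X₂.entry c) (k'+1+1) with h2 | h2
        · exfalso
          rw [hx, h2, Equiv.swap_apply_right] at hc
          omega
        · rw [hx, SYT.swap_fix h1 h2]
    refine ⟨Y, (hp1.trans hp2).tail hrrel, hYe, ?_⟩
    have comp12 := pres_trans hpres1 hpres2 (by omega)
    exact pres_trans (pres_mono (by omega) comp12) pres3 le_rfl
end MoveLemma
section GraphUtil

lemma comp_eq_of_mem {n : ℕ} {V : Type} (G : SCG n V) {a b : V}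
    (h : b ∈ G.comp a) : G.comp a = G.comp b := by
  have hsym : Symmetric (Relation.ReflTransGen G.E) := by
    intro a b hab
    induction hab with
    | refl => exact Relation.ReflTransGen.refl
    | tail _ h ih => exact Relation.ReflTransGen.head (G.symm _ _ h) ih
  ext t
  exact ⟨fun ht => Relation.ReflTransGen.trans (hsym h) ht,
    fun ht => Relation.ReflTransGen.trans h ht⟩

/-- restricted edges in `G_lam` preserve the position of the top entry -/
lemma top_fixed {n : ℕ} {lam : YoungDiagram} (hlam : lam.card = n + 1) (hn : 2 ≤ n)
    {A B : SYT lam}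
    (h : Relation.ReflTransGen ((stdSCG n lam).restrict (n-1)).E A B) :
    ∀ x, (A.entry x = n + 1 ↔ B.entry x = n + 1) := by
  induction h with
  | refl => exact fun x => Iff.rfl
  | tail hAB hstep ih =>
    intro x
    obtain ⟨hE, hne⟩ := hstep
    obtain ⟨c, hcβ, hcIcc⟩ := hne
    have hc2 : c ≤ n - 2 := by
      have := hcIcc.2
      omega
    exact (ih x).trans (entry_top_eq_of_low_label hlam hcβ hc2 hn x)

end GraphUtil

/-- Let `G` be a weak dual equivalence graph of type `n+1` whose `n`-components
are dual equivalence graphs, and let `φ = f` be a surjective morphism `G → G_λ`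
restricting to an isomorphism on `n`-components.  Then two distinct
`n`-components with the same image under `φ` (i.e. both isomorphic to the same
`G_μ`) are not joined by an `(n-1)`-colored edge. -/
theorem stmt_14 {n : ℕ} {V : Type} (G : SCG n V)
    (hW : IsWeakDEG G)
    (hcomp : ∀ v : V, IsDEG ((G.restrict (n - 1)).induce ((G.restrict (n - 1)).comp v)))
    (lam : YoungDiagram) (hlam : lam.card = n + 1) (f : V → SYT lam)
    (hτ : ∀ v : V, G.τ v = (stdSCG n lam).τ (f v))
    (hE : ∀ u v : V, G.E u v → (stdSCG n lam).E (f u) (f v))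
    (hβ : ∀ u v : V, G.E u v → G.β u v = (stdSCG n lam).β (f u) (f v))
    (hsurj : Function.Surjective f)
    (hiso : ∀ v : V,
      Set.InjOn f ((G.restrict (n - 1)).comp v) ∧
      f '' ((G.restrict (n - 1)).comp v) = ((stdSCG n lam).restrict (n - 1)).comp (f v) ∧
      ∀ u w : V, u ∈ (G.restrict (n - 1)).comp v → w ∈ (G.restrict (n - 1)).comp v →
        ((G.restrict (n - 1)).E u w ↔ ((stdSCG n lam).restrict (n - 1)).E (f u) (f w))) :
    ∀ u v : V,
      (G.restrict (n - 1)).comp u ≠ (G.restrict (n - 1)).comp v →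
      f '' ((G.restrict (n - 1)).comp u) = f '' ((G.restrict (n - 1)).comp v) →
      ∀ x ∈ (G.restrict (n - 1)).comp u, ∀ y ∈ (G.restrict (n - 1)).comp v,
        ¬ (G.E x y ∧ (n - 1) ∈ G.β x y) := by
  intro u v hcompne himg x hx y hy
  rintro ⟨hExy, hbxy⟩
  have hsub := G.β_sub x y hbxy
  have hn2 : 2 ≤ n := by
    have := hsub.1
    omega
  obtain ⟨m, rfl⟩ : ∃ m, n = m + 2 := ⟨n - 2, by omega⟩
  -- components merge along restricted edges
  have hmerge : ∀ w z : V, w ∈ (G.restrict (m+2-1)).comp u →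
      (G.restrict (m+2-1)).E w z → z ∈ (G.restrict (m+2-1)).comp v → False := by
    intro w z hw hE' hz
    have h1 : z ∈ (G.restrict (m+2-1)).comp u := Relation.ReflTransGen.tail hw hE'
    exact hcompne ((comp_eq_of_mem _ h1).trans (comp_eq_of_mem _ hz).symm)
  have hlow : ∀ c, c ∈ G.β x y → 1 ≤ c → c ≤ m → False := by
    intro c hc h1 h2
    exact hmerge x y hx ⟨hExy, ⟨c, hc, h1, by omega⟩⟩ hy
  have hEstd := hE x y hExy
  have hβeq := hβ x y hExy
  have hbstd : (m+2-1) ∈ (stdSCG (m+2) lam).β (f x) (f y) := by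
    rw [← hβeq]; exact hbxy
  obtain ⟨hIcc', hEdge', hact⟩ := std_beta_iff.mp hbstd
  obtain ⟨j, hj, hEj⟩ := beta_swap hbstd
  -- f x and f y lie in the same restricted component of the standard graph
  have hfx : f x ∈ ((stdSCG (m+2) lam).restrict (m+2-1)).comp (f u) := by
    rw [← (hiso u).2.1]; exact ⟨x, hx, rfl⟩
  have hfy : f y ∈ ((stdSCG (m+2) lam).restrict (m+2-1)).comp (f u) := by
    rw [← (hiso u).2.1, himg]; exact ⟨y, hy, rfl⟩
  have hsymS : Symmetric (Relation.ReflTransGen ((stdSCG (m+2) lam).restrict (m+2-1)).E) := by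
    intro a b hab
    induction hab with
    | refl => exact Relation.ReflTransGen.refl
    | tail _ h ih =>
      exact Relation.ReflTransGen.head (((stdSCG (m+2) lam).restrict (m+2-1)).symm _ _ h) ih
  have hTU : Relation.ReflTransGen ((stdSCG (m+2) lam).restrict (m+2-1)).E (f x) (f y) :=
    (hsymS hfx).trans hfy
  have hm3 : (m+3) ∈ Set.Icc 1 lam.card := ⟨by omega, by omega⟩
  have hk1Icc : (m+1) ∈ Set.Icc 1 lam.card := ⟨by omega, by omega⟩
  have hk2Icc : (m+1+1) ∈ Set.Icc 1 lam.card := ⟨by omega, by omega⟩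
  rcases hj with hj | hj
  · -- j = m+1 : the genuine case
    have hj' : j = m + 1 := by omega
    subst hj'
    have hactm : (f x).Activ (f y) (m+1) := hact
    have hbet3 := (SYT.activ_high_iff hEj (by omega) (by omega : m+1+2 ≤ lam.card)).mp hactm
    -- content bridges
    have cb1 : (f x).cont (m+1) = cellContent ((f x).cellOf (m+1)) := rfl
    have cb2 : (f x).cont (m+1+1) = cellContent ((f x).cellOf (m+1+1)) := rfl
    have cb3 : (f x).cont (m+1+2) = cellContent ((f x).cellOf (m+1+2)) := rfl
    have cbm : (f x).cont m = cellContent ((f x).cellOf m) := rfl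
    have cbr : cellContent ((f x).cellOf (m+1+2)) = cellContent ((f x).cellOf (m+3)) := rfl
    have cb2' : (f x).cont (m+2) = (f x).cont (m+1+1) := rfl
    have hgap : (f x).cont (m+1) + 2 ≤ (f x).cont (m+1+1) ∨
        (f x).cont (m+1+1) + 2 ≤ (f x).cont (m+1) := by
      rcases hbet3 with ⟨h1, h2⟩ | ⟨h1, h2⟩
      · left; omega
      · right; omega
    obtain ⟨hrow, hcol⟩ := (f x).rows_cols_ne hk1Icc hk2Icc hgap
    have hco := (f x).consec hk1Icc hk2Icc
    have hpmem : (f x).cellOf (m+1) ∈ lam := (f x).cellOf_mem hk1Icc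
    have hqmem : (f x).cellOf (m+1+1) ∈ lam := (f x).cellOf_mem hk2Icc
    -- addability of p and q to `Dset (f x) m`
    have haddp : AddableTo (Dset (f x) m) ((f x).cellOf (m+1)) := by
      constructor
      · rintro ⟨-, hle⟩
        rw [(f x).entry_cellOf hk1Icc] at hle; omega
      · intro z hz1 hz2 hzne
        have hzμ : z ∈ lam := lam.lower_mem hz1 hz2 hpmem
        have hzlt := (f x).entry_lt_entry hzμ hpmem hz1 hz2 hzne
        rw [(f x).entry_cellOf hk1Icc] at hzlt
        exact ⟨hzμ, by omega⟩
    have haddq : AddableTo (Dset (f x) m) ((f x).cellOf (m+1+1)) := by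
      constructor
      · rintro ⟨-, hle⟩
        rw [(f x).entry_cellOf hk2Icc] at hle; omega
      · intro z hz1 hz2 hzne
        have hzμ : z ∈ lam := lam.lower_mem hz1 hz2 hqmem
        have hzlt := (f x).entry_lt_entry hzμ hqmem hz1 hz2 hzne
        rw [(f x).entry_cellOf hk2Icc] at hzlt
        have hznp : z ≠ (f x).cellOf (m+1) := by
          intro hzp
          subst hzp
          rcases hco with ⟨h1, h2, h3⟩ | ⟨h1, h2, h3⟩ | ⟨h1, h3⟩ <;> omega
        have : (f x).entry z ≠ m + 1 := by
          intro hc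
          exact hznp ((f x).eq_cellOf hzμ hc)
        exact ⟨hzμ, by omega⟩
    -- the good corner
    obtain ⟨e, hecor, hbetE⟩ : ∃ e, CornerOf (Dset (f x) m) e ∧
        ((cellContent ((f x).cellOf (m+1)) < cellContent e ∧
          cellContent e < cellContent ((f x).cellOf (m+1+1))) ∨
         (cellContent ((f x).cellOf (m+1+1)) < cellContent e ∧
          cellContent e < cellContent ((f x).cellOf (m+1)))) := by
      rcases hgap with hg | hg
      · obtain ⟨e, h1, h2, h3⟩ := corner_between (Dset_finite (f x) m)
          (Dset_lower (f x) m) haddp haddq (by omega)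
        exact ⟨e, h1, Or.inl ⟨by omega, by omega⟩⟩
      · obtain ⟨e, h1, h2, h3⟩ := corner_between (Dset_finite (f x) m)
          (Dset_lower (f x) m) haddq haddp (by omega)
        exact ⟨e, h1, Or.inr ⟨by omega, by omega⟩⟩
    have heμ : e ∈ lam := hecor.1.1
    have hm1 : 1 ≤ m := by
      have h1 := (f x).one_le_entry heμ
      have h2 := hecor.1.2
      omega
    have hmIcc : m ∈ Set.Icc 1 lam.card := ⟨hm1, by omega⟩
    -- purity: bond m is not activated on the edge x–y
    have hnact : ¬ (f x).Activ (f y) m := by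
      intro ha
      refine hlow m ?_ hm1 le_rfl
      rw [hβeq]
      exact std_beta_iff.mpr ⟨⟨hm1, by omega⟩, hEdge', ha⟩
    have hnb : ¬ (((f x).cont (m+1) < (f x).cont m ∧ (f x).cont m < (f x).cont (m+2)) ∨
        ((f x).cont (m+2) < (f x).cont m ∧ (f x).cont m < (f x).cont (m+1))) := by
      intro h
      exact hnact ((SYT.activ_low_iff hEj hm1 (by omega)).mpr h)
    -- e is not the cell of m
    have hne_ed : e ≠ (f x).cellOf m := by
      intro h
      rw [h] at hbetE
      apply hnb
      rcases hbetE with ⟨h1, h2⟩ | ⟨h1, h2⟩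
      · left; constructor <;> omega
      · right; constructor <;> omega
    -- move entry m to e
    obtain ⟨Y, hpath, hYe, hpres⟩ := Mlem hlam m hm1 (by omega) (f x) e hecor
    -- transport the crossing edge along the path
    have htrans : ∀ Z, Relation.ReflTransGen (Rrel (m+2) lam) (f x) Z →
        ∃ w' z', w' ∈ (G.restrict (m+2-1)).comp u ∧ z' ∈ (G.restrict (m+2-1)).comp v ∧
          f w' = Z ∧ G.E w' z' ∧ (m+2-1) ∈ G.β w' z' := by
      intro Z hZ
      induction hZ with
      | refl => exact ⟨x, y, hx, hy, rfl, hExy, hbxy⟩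
      | @tail B C hAB hstep ih =>
        obtain ⟨w', z', hw', hz', hfw', hEwz, hbwz⟩ := ih
        obtain ⟨hEBC, c, hc1, hc4, hcβ⟩ := hstep
        have hBmem : B ∈ ((stdSCG (m+2) lam).restrict (m+2-1)).comp (f u) := by
          rw [← (hiso u).2.1]; exact ⟨w', hw', hfw'⟩
        have hSrBC : ((stdSCG (m+2) lam).restrict (m+2-1)).E B C :=
          ⟨hEBC, ⟨c, hcβ, hc1, by omega⟩⟩
        have hCmem : C ∈ ((stdSCG (m+2) lam).restrict (m+2-1)).comp (f u) :=
          Relation.ReflTransGen.tail hBmem hSrBC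
        rw [← (hiso u).2.1] at hCmem
        obtain ⟨w'', hw'', hfw''⟩ := hCmem
        have hGrww : (G.restrict (m+2-1)).E w' w'' := by
          rw [(hiso u).2.2 w' w'' hw' hw'', hfw', hfw'']
          exact hSrBC
        have hEww : G.E w' w'' := hGrww.1
        have hβww : G.β w' w'' = (stdSCG (m+2) lam).β B C := by
          rw [hβ w' w'' hEww, hfw', hfw'']
        obtain ⟨z'', h1, h2, h3, h4⟩ := hW.2.2.2.2 (m+2-1) c (Or.inr (by omega)) z' w' w''
          (G.symm w' z' hEwz) (by rw [G.β_symm z' w']; exact hbwz) hEww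
          (by rw [hβww]; exact hcβ)
        exact ⟨w'', z'', hw'',
          Relation.ReflTransGen.tail hz' ⟨h1, ⟨c, h2, hc1, by omega⟩⟩, hfw'',
          G.symm z'' w'' h3, by rw [G.β_symm w'' z'']; exact h4⟩
    obtain ⟨w', z', hw', hz', hfwY, hEwz, hbwz⟩ := htrans Y hpath
    -- Y agrees with f x on the top three entries
    have hXp : (f x).entry ((f x).cellOf (m+1)) = m+1 := (f x).entry_cellOf hk1Icc
    have hXq : (f x).entry ((f x).cellOf (m+1+1)) = m+1+1 := (f x).entry_cellOf hk2Icc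
    have hXr : (f x).entry ((f x).cellOf (m+3)) = m+3 := (f x).entry_cellOf hm3
    have hYp : Y.entry ((f x).cellOf (m+1)) = m+1 := by
      rw [hpres _ (Or.inl (by omega)), hXp]
    have hYq : Y.entry ((f x).cellOf (m+1+1)) = m+1+1 := by
      rw [hpres _ (Or.inl (by omega)), hXq]
    have hYr : Y.entry ((f x).cellOf (m+3)) = m+3 := by
      rw [hpres _ (Or.inl (by omega)), hXr]
    have hYcellp : Y.cellOf (m+1) = (f x).cellOf (m+1) := (Y.eq_cellOf hpmem hYp).symm
    have hYcellq : Y.cellOf (m+1+1) = (f x).cellOf (m+1+1) := (Y.eq_cellOf hqmem hYq).symm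
    have hYcellr : Y.cellOf (m+1+2) = (f x).cellOf (m+3) :=
      (Y.eq_cellOf ((f x).cellOf_mem hm3) hYr).symm
    have hYcelle : Y.cellOf m = e := (Y.eq_cellOf heμ hYe).symm
    -- Y-content bridges
    have yb1 : Y.cont (m+1) = cellContent ((f x).cellOf (m+1)) := by
      rw [SYT.cont, hYcellp]
    have yb2 : Y.cont (m+1+1) = cellContent ((f x).cellOf (m+1+1)) := by
      rw [SYT.cont, hYcellq]
    have yb3 : Y.cont (m+1+2) = cellContent ((f x).cellOf (m+3)) := by
      rw [SYT.cont, hYcellr]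
    have yb2' : Y.cont (m+2) = Y.cont (m+1+1) := rfl
    have ybm : Y.cont m = cellContent e := by
      rw [SYT.cont, hYcelle]
    -- the swapped tableau W
    obtain ⟨W, hEW⟩ := Y.exists_swapped hk1Icc hk2Icc
      (by rw [hYcellp, hYcellq]; exact hrow)
      (by rw [hYcellp, hYcellq]; exact hcol)
    have hWp : W.entry ((f x).cellOf (m+1)) = m+1+1 := by
      rw [hEW _, hYp, Equiv.swap_apply_left]
    have hneYW : Y ≠ W := by
      intro h
      rw [← h, hYp] at hWp
      omega
    have hdkYW : Y.DKSwap W (m+1) := by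
      refine ⟨by omega, hEW, (f x).cellOf (m+1), (f x).cellOf (m+1+1), (f x).cellOf (m+3),
        hpmem, hqmem, (f x).cellOf_mem hm3, hYp, hYq, Or.inr hYr, ?_⟩
      refine mem_Ioo_minmax ?_
      rcases hbet3 with ⟨h1, h2⟩ | ⟨h1, h2⟩
      · left; constructor <;> omega
      · right; constructor <;> omega
    have hactYW : Y.Activ W (m+1) := by
      rw [SYT.activ_high_iff hEW (by omega) (by omega : m+1+2 ≤ lam.card)]
      rcases hbet3 with ⟨h1, h2⟩ | ⟨h1, h2⟩
      · left; constructor <;> omega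
      · right; constructor <;> omega
    have hWβ : (m+2-1) ∈ (stdSCG (m+2) lam).β Y W :=
      std_beta_iff.mpr ⟨⟨by omega, by omega⟩, ⟨hneYW, Or.inl ⟨m+1, hdkYW⟩⟩, hactYW⟩
    -- f z' is the unique (n-1)-neighbor of Y, hence W
    have hbz : (m+2-1) ∈ (stdSCG (m+2) lam).β Y (f z') := by
      have := hbwz
      rw [hβ w' z' hEwz, hfwY] at this
      exact this
    have hfzW : f z' = W := nbr_unique hlam (by omega) hbz hWβ
    -- the bond m is activated on the edge Y–W
    have hactmYW : Y.Activ W m := by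
      rw [SYT.activ_low_iff hEW hm1 (by omega)]
      rcases hbetE with ⟨h1, h2⟩ | ⟨h1, h2⟩
      · left; constructor <;> omega
      · right; constructor <;> omega
    have hmβ : m ∈ (stdSCG (m+2) lam).β Y W :=
      std_beta_iff.mpr ⟨⟨hm1, by omega⟩, ⟨hneYW, Or.inl ⟨m+1, hdkYW⟩⟩, hactmYW⟩
    have hmG : m ∈ G.β w' z' := by
      rw [hβ w' z' hEwz, hfwY, hfzW]
      exact hmβ
    exact hmerge w' z' hw' ⟨hEwz, ⟨m, hmG, hm1, by omega⟩⟩ hz'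
  · -- j = m+2 : moves the top entry, impossible inside one component
    have hj' : j = m + 2 := by omega
    subst hj'
    have h1 : (f x).entry ((f x).cellOf (m+3)) = m+3 := (f x).entry_cellOf hm3
    have h2 : (f y).entry ((f x).cellOf (m+3)) = m+2+1 :=
      (top_fixed hlam (by omega) hTU ((f x).cellOf (m+3))).mp h1
    rw [hEj _, h1] at h2
    rw [show (m+3 : ℕ) = m+2+1 from rfl, Equiv.swap_apply_right] at h2
    omega
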